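/- arXiv:1001.4420 — 5 statements merged into one kernel-verified Lean document; each statement's English description precedes it below -/
import Mathlib

section
/- The n×n two-colour checker board (tile (i,j) has colour (i+j) mod 2) requires exactly 2(n-1) Flood-It moves to flood: after k moves the flooded region connected to the top-left tile is exactly the set of tiles (i,j) with i+j-2 ≤ k, and hence 2(n-1) moves are necessary and sufficient. -/
/-- Tiles of an `n × n` board. -/
abbrev Tile (n : ℕ) := Fin n × Fin n

/-- Two tiles are adjacent if they differ by a unit step (horizontally or vertically). -/
def adjT {n : ℕ} (p q : Tile n) : Prop :=
  ((p.1 : ℤ) - (q.1 : ℤ)).natAbs + ((p.2 : ℤ) - (q.2 : ℤ)).natAbs = 1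

/-- A board assigns one of `c` colours to each tile. -/
abbrev Board (n c : ℕ) := Tile n → Fin c

/-- `SameColorConn B p q` : `q` is in the monochromatic connected region of `B`
containing `p`. -/
def SameColorConn {n c : ℕ} (B : Board n c) (p q : Tile n) : Prop :=
  Relation.ReflTransGen (fun a b => adjT a b ∧ B a = B b) p q

open Classical in
/-- A Flood-It move: recolour the monochromatic region containing `o` with colour `k`. -/
noncomputable def flood {n c : ℕ} (B : Board n c) (o : Tile n) (k : Fin c) : Board n c :=
  fun p => if SameColorConn B o p then k else B p

/-- Play a sequence of Flood-It moves (flooding from `o`). -/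
noncomputable def playMoves {n c : ℕ} (o : Tile n) : Board n c → List (Fin c) → Board n c
  | B, [] => B
  | B, k :: ks => playMoves o (flood B o k) ks

/-- A board is flooded when it is monochromatic. -/
def Flooded {n c : ℕ} (B : Board n c) : Prop := ∀ p q : Tile n, B p = B q

/-- `floodMoves B o` : the minimum number of moves (flooding from `o`) needed to
flood the board `B`. -/
noncomputable def floodMoves {n c : ℕ} (B : Board n c) (o : Tile n) : ℕ :=
  sInf {l : ℕ | ∃ ms : List (Fin c), ms.length = l ∧ Flooded (playMoves o B ms)}

/-- The n×n two-colour checker board: tile (i,j) has colour (i+j) mod 2. -/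
def checker (n : ℕ) : Board n 2 :=
  fun p => if ((p.1 : ℕ) + (p.2 : ℕ)) % 2 = 0 then 0 else 1

/-- The forced move sequence on the checker board: the t-th move (0-indexed)
picks the unique other colour, namely (t+1) mod 2. -/
def checkerMove (t : ℕ) : Fin 2 := if (t + 1) % 2 = 0 then 0 else 1

/- ==================== auxiliary ==================== -/

def par (m : ℕ) : Fin 2 := if m % 2 = 0 then 0 else 1

lemma par_ne (m : ℕ) : par m ≠ par (m+1) := by
  unfold par
  rcases Nat.mod_two_eq_zero_or_one m with h | h <;>
    simp [h, Nat.add_mod] <;> decide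

lemma fin2_cases (i : ℕ) (m : Fin 2) : m = par i ∨ m = par (i+1) := by
  unfold par
  rcases Nat.mod_two_eq_zero_or_one i with h | h <;>
    simp [h, Nat.add_mod] <;> fin_cases m <;> simp

def Bk (n k : ℕ) : Board n 2 :=
  fun p => if (p.1 : ℕ) + (p.2 : ℕ) ≤ k then par k else par ((p.1 : ℕ) + (p.2 : ℕ))

lemma checker_apply (n : ℕ) (p : Tile n) : checker n p = par ((p.1:ℕ)+(p.2:ℕ)) := rfl

lemma checker_eq (n : ℕ) : checker n = Bk n 0 := by
  funext p
  rw [checker_apply]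
  unfold Bk
  split_ifs with h
  · rw [Nat.le_zero.mp h]
  · rfl

lemma adj_sum {n : ℕ} {p q : Tile n} (h : adjT p q) :
    (q.1:ℕ)+(q.2:ℕ) ≤ (p.1:ℕ)+(p.2:ℕ)+1 := by
  unfold adjT at h
  omega

lemma conn_color {n c : ℕ} {B : Board n c} {o p : Tile n} (h : SameColorConn B o p) :
    B p = B o := by
  induction h with
  | refl => rfl
  | tail _ h ih => rw [← h.2, ih]

lemma region (n k : ℕ) (hn : 1 ≤ n) (p : Tile n) :
    SameColorConn (Bk n k) (⟨0,hn⟩,⟨0,hn⟩) p ↔ (p.1:ℕ)+(p.2:ℕ) ≤ k := by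
  constructor
  · intro h
    induction h with
    | refl => simp
    | tail _ st ih =>
      rename_i b c _
      by_contra hc
      have h1 := adj_sum st.1
      have hb : Bk n k b = par k := by unfold Bk; rw [if_pos ih]
      have hcc : Bk n k c = par (k+1) := by
        unfold Bk
        rw [if_neg (by omega), show (c.1:ℕ)+(c.2:ℕ) = k+1 by omega]
      exact par_ne k (hb ▸ hcc ▸ st.2)
  · have key : ∀ m (p : Tile n), (p.1:ℕ)+(p.2:ℕ) = m → m ≤ k →
        SameColorConn (Bk n k) (⟨0,hn⟩,⟨0,hn⟩) p := by
      intro m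
      induction m with
      | zero =>
        intro p hp _
        have : p = (⟨0,hn⟩,⟨0,hn⟩) := by
          ext
          · simp; omega
          · simp; omega
        rw [this]
        exact .refl
      | succ m ih =>
        intro p hp hm
        have hcol : ∀ q : Tile n, (q.1:ℕ)+(q.2:ℕ) ≤ k → Bk n k q = par k := by
          intro q hq; unfold Bk; rw [if_pos hq]
        by_cases h1 : (p.1 : ℕ) = 0
        · refine .tail (ih (p.1, ⟨(p.2:ℕ)-1, by omega⟩) (by simp; omega) (by omega)) ⟨?_, ?_⟩
          · unfold adjT; simp; omega
          · rw [hcol _ (by simp; omega), hcol _ (by omega)]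
        · refine .tail (ih (⟨(p.1:ℕ)-1, by omega⟩, p.2) (by simp; omega) (by omega)) ⟨?_, ?_⟩
          · unfold adjT; simp; omega
          · rw [hcol _ (by simp; omega), hcol _ (by omega)]
    exact fun h => key _ p rfl h

lemma flood_step (n k : ℕ) (hn : 1 ≤ n) :
    flood (Bk n k) (⟨0,hn⟩,⟨0,hn⟩) (par (k+1)) = Bk n (k+1) := by
  funext p
  unfold flood
  split_ifs with h
  · rw [region n k hn] at h
    unfold Bk
    rw [if_pos (by omega)]
  · rw [region n k hn] at h
    push_neg at h
    unfold Bk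
    by_cases h2 : (p.1:ℕ)+(p.2:ℕ) = k+1
    · rw [if_neg (by omega), if_pos (by omega), h2]
    · rw [if_neg (by omega), if_neg (by omega)]

lemma playMoves_append {n c : ℕ} (o : Tile n) (B : Board n c) (ms : List (Fin c)) (m : Fin c) :
    playMoves o B (ms ++ [m]) = flood (playMoves o B ms) o m := by
  induction ms generalizing B with
  | nil => rfl
  | cons a t ih =>
    simp only [List.cons_append, playMoves]
    exact ih _

lemma play_range (n k : ℕ) (hn : 1 ≤ n) :
    playMoves (⟨0,hn⟩,⟨0,hn⟩) (checker n) ((List.range k).map checkerMove) = Bk n k := by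
  induction k with
  | zero => simpa [playMoves] using checker_eq n
  | succ k ih =>
    rw [List.range_succ, List.map_append]
    simp only [List.map_cons, List.map_nil]
    rw [playMoves_append, ih]
    exact flood_step n k hn

lemma flood_self {n c : ℕ} (B : Board n c) (o : Tile n) : flood B o (B o) = B := by
  funext p
  unfold flood
  split_ifs with h
  · exact (conn_color h).symm
  · rfl

lemma play_general (n : ℕ) (hn : 1 ≤ n) (ms : List (Fin 2)) (i : ℕ) :
    ∃ j ≤ ms.length, playMoves (⟨0,hn⟩,⟨0,hn⟩) (Bk n i) ms = Bk n (i + j) := by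
  induction ms generalizing i with
  | nil => exact ⟨0, by simp, rfl⟩
  | cons m t ih =>
    have ho : Bk n i ((⟨0,hn⟩,⟨0,hn⟩) : Tile n) = par i := by
      unfold Bk; rw [if_pos (by simp)]
    rcases fin2_cases i m with hm | hm
    · have hf : flood (Bk n i) (⟨0,hn⟩,⟨0,hn⟩) m = Bk n i := by
        rw [hm, ← ho, flood_self]
      obtain ⟨j, hj, hp⟩ := ih i
      exact ⟨j, by simp; omega, by simpa only [playMoves, hf] using hp⟩
    · have hf : flood (Bk n i) (⟨0,hn⟩,⟨0,hn⟩) m = Bk n (i+1) := by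
        rw [hm]; exact flood_step n i hn
      obtain ⟨j, hj, hp⟩ := ih (i+1)
      refine ⟨j+1, by simp; omega, ?_⟩
      simp only [playMoves, hf]
      rw [show i+(j+1) = (i+1)+j by omega]
      exact hp

lemma flooded_Bk (n k : ℕ) (h : 2*(n-1) ≤ k) : Flooded (Bk n k) := by
  intro p q
  have h1 := p.1.isLt
  have h2 := p.2.isLt
  have h3 := q.1.isLt
  have h4 := q.2.isLt
  unfold Bk
  rw [if_pos (by omega), if_pos (by omega)]

lemma not_flooded (n j : ℕ) (hn : 1 ≤ n) (h : j < 2*(n-1)) : ¬ Flooded (Bk n j) := by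
  intro hf
  have hq : (if min (j+1) (n-1) + (j+1 - min (j+1) (n-1)) ≤ j then par j
        else par (min (j+1) (n-1) + (j+1 - min (j+1) (n-1))))
      = (if 0 + 0 ≤ j then par j else par (0+0)) :=
    hf ((⟨min (j+1) (n-1), by omega⟩, ⟨j+1 - min (j+1) (n-1), by omega⟩) : Tile n)
      (⟨0,hn⟩,⟨0,hn⟩)
  rw [if_neg (by omega), if_pos (by omega),
    show (min (j+1) (n-1)) + (j+1 - min (j+1) (n-1)) = j+1 by omega] at hq
  exact par_ne j hq.symm


/-- on the n×n checker board, after k moves (of the forced move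
sequence) the flooded region is exactly the k-th anti-diagonal triangle
{(i,j) : i+j ≤ k} (0-indexed), and the minimum number of moves to flood it is
exactly 2(n-1). -/
theorem stmt8 (n : ℕ) (hn : 1 ≤ n) :
    (∀ k ≤ 2 * (n - 1),
      {p : Tile n |
          SameColorConn (playMoves (⟨0, hn⟩, ⟨0, hn⟩) (checker n)
            ((List.range k).map checkerMove)) (⟨0, hn⟩, ⟨0, hn⟩) p}
        = {p : Tile n | (p.1 : ℕ) + (p.2 : ℕ) ≤ k}) ∧
    floodMoves (checker n) (⟨0, hn⟩, ⟨0, hn⟩) = 2 * (n - 1) := by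
  constructor
  · intro k _
    ext p
    simp only [Set.mem_setOf_eq]
    rw [play_range n k hn]
    exact region n k hn p
  · have mem : 2*(n-1) ∈ {l : ℕ | ∃ ms : List (Fin 2), ms.length = l ∧
        Flooded (playMoves (⟨0,hn⟩,⟨0,hn⟩) (checker n) ms)} := by
      refine ⟨(List.range (2*(n-1))).map checkerMove, by simp, ?_⟩
      rw [play_range n (2*(n-1)) hn]
      exact flooded_Bk n _ le_rfl
    have lb : ∀ l ∈ {l : ℕ | ∃ ms : List (Fin 2), ms.length = l ∧
        Flooded (playMoves (⟨0,hn⟩,⟨0,hn⟩) (checker n) ms)}, 2*(n-1) ≤ l := by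
      rintro l ⟨ms, hlen, hfl⟩
      rw [checker_eq] at hfl
      obtain ⟨j, hj, hp⟩ := play_general n hn ms 0
      rw [hp] at hfl
      by_contra hc
      have : j < 2*(n-1) := by omega
      exact not_flooded n _ hn (by simpa using this) (by simpa using hfl)
    exact le_antisymm (Nat.sInf_le mem) (le_csInf ⟨_, mem⟩ lb)
end

section
/- At least (n² − r²)/(2r²) pairwise disjoint r-diamonds (possibly cropped by at most two edges of the board, but each with its centre in the board) can be packed into an n×n board, provided 1 ≤ r < n/2. -/
/-- Grid (taxicab) distance between two tiles. -/
def gdist {n : ℕ} (p q : Tile n) : ℕ :=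
  ((p.1 : ℤ) - (q.1 : ℤ)).natAbs + ((p.2 : ℤ) - (q.2 : ℤ)).natAbs

lemma cnt (c K : ℕ) :
    ((Finset.range K).filter (fun j => (c + j) % 2 = 0)).card = (K + 1 - c % 2) / 2 := by
  induction K with
  | zero => simp; omega
  | succ K ih =>
    rw [Finset.range_add_one, Finset.filter_insert]
    by_cases h : (c + K) % 2 = 0
    · rw [if_pos h, Finset.card_insert_of_notMem (by simp), ih]; omega
    · rw [if_neg h, ih]; omega

/-- if 1 ≤ r < n/2, at least (n² − r²)/(2r²) pairwise disjoint
(possibly cropped) r-diamonds, each with its centre in the board, can be packed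
into an n×n board.  The r-diamond centred at `t` is the set of tiles at grid
distance less than r from `t`. -/
theorem stmt14 (n r : ℕ) (hr : 1 ≤ r) (hrn : 2 * r < n) :
    ∃ C : Finset (Tile n),
      ((n : ℝ) ^ 2 - (r : ℝ) ^ 2) / (2 * (r : ℝ) ^ 2) ≤ (C.card : ℝ) ∧
      ∀ c₁ ∈ C, ∀ c₂ ∈ C, c₁ ≠ c₂ →
        ∀ p : Tile n, ¬(gdist c₁ p < r ∧ gdist c₂ p < r) := by
  have hn : 0 < n := by omega
  set K : ℕ := (n - 1) / r + 1 with hKdef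
  have hlt : ∀ i, i < K → i * r < n := by
    intro i hi
    have h1 : i ≤ (n - 1) / r := by omega
    have h2 : i * r ≤ (n - 1) / r * r := Nat.mul_le_mul_right r h1
    have h3 : (n - 1) / r * r ≤ n - 1 := Nat.div_mul_le_self _ _
    omega
  have hKr : n ≤ K * r := by
    have h1 := Nat.div_add_mod (n - 1) r
    have h2 : (n - 1) % r < r := Nat.mod_lt _ (by omega)
    have h3 : K * r = r * ((n - 1) / r) + r := by rw [hKdef]; ring
    omega
  have hval : ∀ i, i < K → i * r % n = i * r := fun i hi => Nat.mod_eq_of_lt (hlt i hi)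
  set g : ℕ → ℕ → Tile n := fun i j =>
    (⟨i * r % n, Nat.mod_lt _ hn⟩, ⟨j * r % n, Nat.mod_lt _ hn⟩) with hg
  set C : Finset (Tile n) :=
    (Finset.range K).biUnion (fun i =>
      ((Finset.range K).filter fun j => (i + j) % 2 = 0).image fun j => g i j) with hC
  -- membership characterization
  have hmem : ∀ c : Tile n, c ∈ C → ∃ i j, i < K ∧ j < K ∧ (i + j) % 2 = 0 ∧ c = g i j := by
    intro c hc
    simp only [hC, Finset.mem_biUnion, Finset.mem_image, Finset.mem_filter,
      Finset.mem_range] at hc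
    obtain ⟨i, hi, j, ⟨hj, hp⟩, hgij⟩ := hc
    exact ⟨i, j, hi, hj, hp, hgij.symm⟩
  -- injectivity facts
  have hginj1 : ∀ i i' j j', i < K → i' < K → g i j = g i' j' → i = i' := by
    intro i i' j j' hi hi' heq
    have h1 : i * r % n = i' * r % n := congrArg (fun t : Tile n => (t.1 : ℕ)) heq
    rw [hval i hi, hval i' hi'] at h1
    exact Nat.eq_of_mul_eq_mul_right (by omega) h1
  have hginj2 : ∀ i i' j j', j < K → j' < K → g i j = g i' j' → j = j' := by
    intro i i' j j' hj hj' heq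
    have h1 : j * r % n = j' * r % n := congrArg (fun t : Tile n => (t.2 : ℕ)) heq
    rw [hval j hj, hval j' hj'] at h1
    exact Nat.eq_of_mul_eq_mul_right (by omega) h1
  refine ⟨C, ?_, ?_⟩
  · -- cardinality bound
    have hcard : C.card = ∑ i ∈ Finset.range K, (K + 1 - i % 2) / 2 := by
      rw [hC, Finset.card_biUnion]
      · refine Finset.sum_congr rfl fun i hi => ?_
        rw [Finset.card_image_of_injOn, cnt i K]
        intro a ha b hb hab
        simp only [Finset.mem_coe, Finset.mem_filter, Finset.mem_range] at ha hb
        exact hginj2 i i a b ha.1 hb.1 hab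
      · intro i hi i' hi' hne
        simp only [Finset.mem_coe, Finset.mem_range] at hi hi'
        rw [Function.onFun, Finset.disjoint_left]
        intro c hci hci'
        simp only [Finset.mem_image, Finset.mem_filter, Finset.mem_range] at hci hci'
        obtain ⟨j, ⟨hj, _⟩, hcj⟩ := hci
        obtain ⟨j', ⟨hj', _⟩, hcj'⟩ := hci'
        exact hne (hginj1 i i' j j' hi hi' (hcj.trans hcj'.symm))
    have hsum : K * K ≤ 2 * C.card := by
      rw [hcard]
      have h1 : ∑ i ∈ Finset.range K, (K + 1 - i % 2) / 2
          = ∑ i ∈ Finset.range K, (if i % 2 = 0 then (K + 1) / 2 else K / 2) :=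
        Finset.sum_congr rfl fun i _ => by
          rcases Nat.mod_two_eq_zero_or_one i with h | h <;> simp [h]
      rw [h1, Finset.sum_ite, Finset.sum_const, Finset.sum_const, smul_eq_mul, smul_eq_mul]
      have hE : ((Finset.range K).filter fun i => i % 2 = 0).card = (K + 1) / 2 := by
        have := cnt 0 K
        simpa using this
      have hO : ((Finset.range K).filter fun i => ¬ i % 2 = 0).card = K / 2 := by
        have h2 := Finset.card_filter_add_card_filter_not
          (s := Finset.range K) (p := fun i => i % 2 = 0)
        rw [hE, Finset.card_range] at h2
        omega
      rw [hE, hO]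
      have hEO : (K + 1) / 2 + K / 2 = K := by omega
      set E := (K + 1) / 2
      set O := K / 2
      calc K * K = (E + O) * (E + O) := by rw [hEO]
        _ ≤ 2 * (E * E + O * O) := by nlinarith [two_mul_le_add_sq E O]
        _ = 2 * (E * ((K+1)/2) + O * (K/2)) := rfl
    rw [div_le_iff₀ (by positivity)]
    have h1 : n * n ≤ (2 * C.card) * (r * r) := by
      calc n * n ≤ (K * r) * (K * r) := Nat.mul_le_mul hKr hKr
        _ = (K * K) * (r * r) := by ring
        _ ≤ (2 * C.card) * (r * r) := Nat.mul_le_mul_right _ hsum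
    have h2 : (n : ℝ) * n ≤ (2 * C.card) * (r * r) := by exact_mod_cast h1
    nlinarith [h2, sq_nonneg ((r : ℝ))]
  · -- disjointness
    have E : ∀ i j, i < K → j < K → ∀ q : Tile n,
        gdist (g i j) q = ((i : ℤ) * r - (q.1 : ℤ)).natAbs
          + ((j : ℤ) * r - (q.2 : ℤ)).natAbs := by
      intro i j hi hj q
      simp only [gdist, hg]
      rw [hval i hi, hval j hj]
      push_cast
      ring_nf
    intro c₁ hc₁ c₂ hc₂ hne p hcontra
    obtain ⟨hd₁, hd₂⟩ := hcontra
    obtain ⟨i₁, j₁, hi₁, hj₁, hp₁, rfl⟩ := hmem c₁ hc₁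
    obtain ⟨i₂, j₂, hi₂, hj₂, hp₂, rfl⟩ := hmem c₂ hc₂
    rw [E i₁ j₁ hi₁ hj₁ p] at hd₁
    rw [E i₂ j₂ hi₂ hj₂ p] at hd₂
    have hne' : ¬(i₁ = i₂ ∧ j₁ = j₂) := by
      rintro ⟨h1, h2⟩
      exact hne (by rw [h1, h2])
    -- abbreviate the integer differences
    set a : ℕ := ((i₁ : ℤ) - i₂).natAbs with ha
    set b : ℕ := ((j₁ : ℤ) - j₂).natAbs with hb
    have hab : 2 ≤ a + b := by omega
    -- triangle inequality on each coordinate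
    have htri1 : a * r ≤ (((i₁ : ℤ) * r - (p.1 : ℤ)).natAbs
        + ((i₂ : ℤ) * r - (p.1 : ℤ)).natAbs) := by
      have h1 : ((i₁ : ℤ) - i₂).natAbs * r = (((i₁ : ℤ) - i₂) * r).natAbs := by
        rw [Int.natAbs_mul]; simp
      rw [ha, h1]
      have h2 : ((i₁ : ℤ) - i₂) * r = ((i₁ : ℤ) * r - p.1) - ((i₂ : ℤ) * r - p.1) := by ring
      rw [h2]
      omega
    have htri2 : b * r ≤ (((j₁ : ℤ) * r - (p.2 : ℤ)).natAbs
        + ((j₂ : ℤ) * r - (p.2 : ℤ)).natAbs) := by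
      have h1 : ((j₁ : ℤ) - j₂).natAbs * r = (((j₁ : ℤ) - j₂) * r).natAbs := by
        rw [Int.natAbs_mul]; simp
      rw [hb, h1]
      have h2 : ((j₁ : ℤ) - j₂) * r = ((j₁ : ℤ) * r - p.2) - ((j₂ : ℤ) * r - p.2) := by ring
      rw [h2]
      omega
    have hsmall : a * r + b * r ≤ 2 * r - 2 := by omega
    have hbig : 2 * r ≤ (a + b) * r := Nat.mul_le_mul_right r hab
    have : (a + b) * r = a * r + b * r := by ring
    omega
end

section
/- Reducing SCS to strings of length exactly 2: Let S = {s_1,…,s_k} be strings of length at most 2 over alphabet Σ with s_k of length 1, consisting of the single character a, and let S' = {s_1,…,s_{k-1}}. If a occurs in some string of S', then the minimum length of a common supersequence of S equals that of S'; if a occurs in no string of S', the minimum length of a common supersequence of S equals that of S' plus 1. -/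
/-- The length of a shortest common supersequence of a finite family of strings. -/
noncomputable def scsLen {α : Type*} (S : List (List α)) : ℕ :=
  sInf {l : ℕ | ∃ t : List α, t.length = l ∧ ∀ s ∈ S, s.Sublist t}

lemma scs_nonempty {α : Type*} (S : List (List α)) :
    {l : ℕ | ∃ t : List α, t.length = l ∧ ∀ s ∈ S, s.Sublist t}.Nonempty :=
  ⟨S.flatten.length, S.flatten, rfl, fun _ hs => List.sublist_flatten_of_mem hs⟩

/-- removing a length-1 string from an SCS instance whose strings
have length at most 2: if the character occurs in another string the SCS length
is unchanged, otherwise it increases by exactly one. -/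
theorem stmt15 {α : Type*} (S' : List (List α)) (a : α)
    (hlen : ∀ s ∈ S', s.length ≤ 2) :
    ((∃ s ∈ S', a ∈ s) → scsLen (S' ++ [[a]]) = scsLen S') ∧
    ((∀ s ∈ S', a ∉ s) → scsLen (S' ++ [[a]]) = scsLen S' + 1) := by
  classical
  constructor
  · rintro ⟨s₀, hs₀, ha⟩
    unfold scsLen
    congr 1
    ext l
    simp only [Set.mem_setOf_eq]
    constructor
    · rintro ⟨t, htl, ht⟩
      exact ⟨t, htl, fun s hs => ht s (by simp [hs])⟩
    · rintro ⟨t, htl, ht⟩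
      refine ⟨t, htl, fun s hs => ?_⟩
      rcases List.mem_append.1 hs with h | h
      · exact ht s h
      · simp only [List.mem_singleton] at h
        subst h
        exact (List.singleton_sublist.2 ha).trans (ht s₀ hs₀)
  · intro hna
    unfold scsLen
    apply le_antisymm
    · obtain ⟨t, htl, ht⟩ := Nat.sInf_mem (scs_nonempty S')
      have : t.length + 1 ∈ {l : ℕ | ∃ t : List α,
          t.length = l ∧ ∀ s ∈ S' ++ [[a]], s.Sublist t} := by
        refine ⟨t ++ [a], by simp, fun s hs => ?_⟩
        rcases List.mem_append.1 hs with h | h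
        · exact (ht s h).trans (List.sublist_append_left t [a])
        · simp only [List.mem_singleton] at h
          subst h
          exact List.sublist_append_right t [a]
      calc sInf _ ≤ t.length + 1 := Nat.sInf_le this
        _ = _ := by rw [htl]
    · obtain ⟨t, htl, ht⟩ := Nat.sInf_mem (scs_nonempty (S' ++ [[a]]))
      have hat : a ∈ t := List.singleton_sublist.1 (ht [a] (by simp))
      have herase : ∀ s ∈ S', s.Sublist (t.erase a) := by
        intro s hs
        have := (ht s (by simp [hs])).erase a
        rwa [List.erase_of_not_mem (hna s hs)] at this
      have hle : sInf {l : ℕ | ∃ t : List α,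
          t.length = l ∧ ∀ s ∈ S', s.Sublist t} ≤ (t.erase a).length :=
        Nat.sInf_le ⟨t.erase a, rfl, herase⟩
      have hlen' : (t.erase a).length + 1 = t.length :=
        List.length_erase_add_one hat
      omega
end

section
/- Let S = {s_1,…,s_k} be strings of length exactly 2 over Σ with s_k = aa for some a ∈ Σ. Let a' be a symbol not occurring in S, and let S' = {s_1,…,s_{k-1}, aa', a'a}. Then the length of a shortest common supersequence of S' equals the length of a shortest common supersequence of S plus 1. -/
open List

private lemma two_count {α : Type*} [DecidableEq α] {a a' : α} (hne : a' ≠ a) :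
    ∀ t : List α, [a, a'].Sublist t → [a', a].Sublist t →
      2 ≤ count a t ∨ 2 ≤ count a' t := by
  intro t
  induction t with
  | nil => intro h1 _; simp at h1
  | cons x xs ih =>
    intro h1 h2
    rw [cons_sublist_cons'] at h1 h2
    rcases h1 with h1 | ⟨rfl, h1⟩
    · rcases h2 with h2 | ⟨rfl, h2⟩
      · rcases ih h1 h2 with h | h
        · exact Or.inl (h.trans (count_le_count_cons))
        · exact Or.inr (h.trans (count_le_count_cons))
      · right
        have ha' : a' ∈ xs := h1.subset (by simp)
        have : 0 < count a' xs := count_pos_iff.mpr ha'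
        rw [count_cons_self]; omega
    · rcases h2 with h2 | ⟨h2', _⟩
      · left
        have ha : a ∈ xs := h2.subset (by simp)
        have : 0 < count a xs := count_pos_iff.mpr ha
        rw [count_cons_self]; omega
      · exact absurd h2' hne

private lemma filter_ne_length {α : Type*} [DecidableEq α] (a' : α) (l : List α) :
    (l.filter (· ≠ a')).length + count a' l = l.length := by
  induction l with
  | nil => simp
  | cons x xs ih =>
    rw [filter_cons, count_cons]
    simp only [ne_eq, decide_not] at ih ⊢
    by_cases hx : x = a' <;> simp [hx] <;> omega

/-- replacing the string `aa` by the two strings `aa'`, `a'a`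
(with `a'` a fresh symbol) in an SCS instance of length-2 strings increases the
shortest common supersequence length by exactly one. -/
theorem stmt16 {α : Type*} (S₀ : List (List α)) (a a' : α)
    (hlen : ∀ s ∈ S₀, s.length = 2)
    (hne : a' ≠ a)
    (hfresh : ∀ s ∈ S₀, a' ∉ s) :
    scsLen (S₀ ++ [[a, a'], [a', a]]) = scsLen (S₀ ++ [[a, a]]) + 1 := by
  classical
  have hne₂ : {l : ℕ | ∃ t : List α, t.length = l ∧
      ∀ s ∈ S₀ ++ [[a, a]], s.Sublist t}.Nonempty :=
    ⟨_, (S₀ ++ [[a, a]]).flatten, rfl, fun s hs => sublist_flatten_of_mem hs⟩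
  have hne₁ : {l : ℕ | ∃ t : List α, t.length = l ∧
      ∀ s ∈ S₀ ++ [[a, a'], [a', a]], s.Sublist t}.Nonempty :=
    ⟨_, (S₀ ++ [[a, a'], [a', a]]).flatten, rfl, fun s hs => sublist_flatten_of_mem hs⟩
  unfold scsLen
  have hub : sInf {l : ℕ | ∃ t : List α, t.length = l ∧
      ∀ s ∈ S₀ ++ [[a, a'], [a', a]], s.Sublist t} ≤
      sInf {l : ℕ | ∃ t : List α, t.length = l ∧
      ∀ s ∈ S₀ ++ [[a, a]], s.Sublist t} + 1 := by
    obtain ⟨t, ht, hall⟩ := Nat.sInf_mem hne₂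
    rw [← ht]
    have haa : [a, a].Sublist t := hall [a, a] (by simp)
    rw [show [a, a] = a :: [a] from rfl, cons_sublist_iff] at haa
    obtain ⟨r₁, r₂, rfl, har₁, har₂⟩ := haa
    refine Nat.sInf_le ⟨r₁ ++ a' :: r₂, by simp; omega, ?_⟩
    intro s hs
    rw [mem_append] at hs
    rcases hs with hs | hs
    · exact (hall s (mem_append_left _ hs)).trans
        ((append_sublist_append_left r₁).mpr (sublist_cons_self a' r₂))
    · simp only [mem_cons, mem_singleton] at hs
      rcases hs with rfl | rfl | h
      · exact Sublist.append (singleton_sublist.mpr har₁)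
          (singleton_sublist.mpr (mem_cons_self))
      · exact (har₂.cons₂ a').trans (sublist_append_right r₁ (a' :: r₂))
      · simp at h
  have hlb : sInf {l : ℕ | ∃ t : List α, t.length = l ∧
      ∀ s ∈ S₀ ++ [[a, a]], s.Sublist t} + 1 ≤
      sInf {l : ℕ | ∃ t : List α, t.length = l ∧
      ∀ s ∈ S₀ ++ [[a, a'], [a', a]], s.Sublist t} := by
    obtain ⟨t', ht', hall'⟩ := Nat.sInf_mem hne₁
    rw [← ht']
    have h1 : [a, a'].Sublist t' := hall' _ (by simp)
    have h2 : [a', a].Sublist t' := hall' _ (by simp)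
    have ha'mem : a' ∈ t' := h1.subset (by simp)
    have hamem : a ∈ t' := h1.subset (by simp)
    have hS : ∀ s ∈ S₀, s.Sublist (t'.filter (· ≠ a')) := by
      intro s hs
      have heq : s.filter (· ≠ a') = s := filter_eq_self.mpr (fun x hx => by
        simp only [ne_eq, decide_not, Bool.not_eq_true', decide_eq_false_iff_not]
        rintro rfl; exact hfresh s hs hx)
      exact heq ▸ Sublist.filter _ (hall' s (mem_append_left _ hs))
    rcases two_count hne t' h1 h2 with hc | hc
    · set t := t'.filter (· ≠ a') with htdef
      have haa : [a, a].Sublist t := by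
        rw [show [a, a] = replicate 2 a from rfl, replicate_sublist_iff]
        rwa [htdef, count_filter (by simp [Ne.symm hne])]
      have hlt : t.length < t'.length := by
        rcases lt_or_eq_of_le (filter_sublist (p := (· ≠ a')) (l := t')).length_le with h | h
        · exact h
        · exfalso
          have heq := Sublist.eq_of_length (filter_sublist (l := t')) h
          have : a' ∈ t := by rw [htdef, heq]; exact ha'mem
          simp [htdef, mem_filter] at this
      have hmem : sInf {l : ℕ | ∃ t : List α, t.length = l ∧
          ∀ s ∈ S₀ ++ [[a, a]], s.Sublist t} ≤ t.length := by
        refine Nat.sInf_le ⟨t, rfl, ?_⟩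
        intro s hs
        rw [mem_append] at hs
        rcases hs with hs | hs
        · exact hS s hs
        · simp only [mem_singleton] at hs; subst hs; exact haa
      omega
    · set t := a :: t'.filter (· ≠ a') with htdef
      have hafil : a ∈ t'.filter (· ≠ a') := by
        rw [mem_filter]; exact ⟨hamem, by simp [Ne.symm hne]⟩
      have haa : [a, a].Sublist t :=
        cons_sublist_cons.mpr (singleton_sublist.mpr hafil)
      have hlen' : t.length + 1 ≤ t'.length := by
        have := filter_ne_length a' t'
        simp only [htdef, length_cons]
        omega
      have hmem : sInf {l : ℕ | ∃ t : List α, t.length = l ∧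
          ∀ s ∈ S₀ ++ [[a, a]], s.Sublist t} ≤ t.length := by
        refine Nat.sInf_le ⟨t, rfl, ?_⟩
        intro s hs
        rw [mem_append] at hs
        rcases hs with hs | hs
        · exact (hS s hs).cons a
        · simp only [mem_singleton] at hs; subst hs; exact haa
      omega
  omega
end

section
/- Greedy is bad for Flood-It: for every n ≥ 4 there exists an n×n board on 3 colours with m(B) = 3, on which the greedy strategy that always selects the colour yielding the largest immediate gain in flooded tiles makes n moves. -/
/-- The number of tiles in the monochromatic region of `B` containing `o`. -/
noncomputable def regionSize {n c : ℕ} (B : Board n c) (o : Tile n) : ℕ :=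
  Set.ncard {p : Tile n | SameColorConn B o p}

/-- `IsGreedy o B ms` : the move sequence `ms` is a complete run of the greedy
strategy on `B`: it plays until the board is flooded, and each move picks a
colour maximising the size of the resulting flooded region (i.e. the immediate
gain in flooded tiles). -/
def IsGreedy {n c : ℕ} (o : Tile n) : Board n c → List (Fin c) → Prop
  | B, [] => Flooded B
  | B, k :: ks => ¬Flooded B ∧
      (∀ k' : Fin c, regionSize (flood B o k') o ≤ regionSize (flood B o k) o) ∧
      IsGreedy o (flood B o k) ks

namespace S19

/-- colour of chamber (row) `t` -/
def par (t : ℕ) : Fin 3 := if t % 2 = 1 then 1 else 2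

lemma par_ne_zero (t : ℕ) : par t ≠ 0 := by
  unfold par; split <;> decide

lemma par_succ_ne (t : ℕ) : par (t+1) ≠ par t := by
  rcases Nat.mod_two_eq_zero_or_one t with h | h
  · have h1 : (t+1) % 2 = 1 := by omega
    simp only [par, h, h1]; decide
  · have h1 : (t+1) % 2 = 0 := by omega
    simp only [par, h, h1]; decide

lemma par_one_or_two (t : ℕ) : par t = 1 ∨ par t = 2 := by
  unfold par; split <;> simp

lemma par_cases (t : ℕ) (k : Fin 3) : k = 0 ∨ k = par t ∨ k = par (t+1) := by
  have hk : k = 0 ∨ k = 1 ∨ k = 2 := by omega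
  rcases Nat.mod_two_eq_zero_or_one t with h | h
  · have h1 : (t+1) % 2 = 1 := by omega
    simp only [par, h, h1]
    rcases hk with h|h|h <;> simp [h]
  · have h1 : (t+1) % 2 = 0 := by omega
    simp only [par, h, h1]
    rcases hk with h|h|h <;> simp [h]

variable {n : ℕ}

/-- hub cells: column 0, rows 1..n-2 -/
def hubP (n : ℕ) (p : Tile n) : Prop := 1 ≤ p.1.val ∧ p.1.val ≤ n - 2 ∧ p.2.val = 0

instance (p : Tile n) : Decidable (hubP n p) := by unfold hubP; infer_instance

def myB (n : ℕ) : Board n 3 := fun p => if hubP n p then 0 else par p.1.val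

def Rt (n t : ℕ) : Set (Tile n) := {p | p.1.val ≤ t ∧ ¬ hubP n p}

def Hub (n : ℕ) : Set (Tile n) := {p | hubP n p}

lemma conn_colour {B : Board n 3} {p q : Tile n} (h : SameColorConn B p q) : B p = B q := by
  induction h with
  | refl => rfl
  | tail _ h ih => exact ih.trans h.2

lemma conn_step {B : Board n 3} {p q : Tile n} (ha : adjT p q) (hc : B p = B q) :
    SameColorConn B p q :=
  Relation.ReflTransGen.single ⟨ha, hc⟩

lemma adjT_right (i j : ℕ) (h1 : i < n) (h2 : j + 1 < n) :
    adjT ((⟨i, h1⟩ : Fin n), (⟨j, by omega⟩ : Fin n)) (⟨i, h1⟩, ⟨j+1, h2⟩) := by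
  simp [adjT]

lemma adjT_down (i j : ℕ) (h1 : i + 1 < n) (h2 : j < n) :
    adjT ((⟨i, by omega⟩ : Fin n), (⟨j, h2⟩ : Fin n)) (⟨i+1, h1⟩, ⟨j, h2⟩) := by
  simp [adjT]

lemma conn_row_aux (B : Board n 3) (i : ℕ) (hi : i < n) (j d : ℕ) (hd : j + d < n)
    (hc : ∀ j', j ≤ j' → j' ≤ j + d → ∀ (h : j' < n),
        B (⟨i, hi⟩, ⟨j', h⟩) = B (⟨i, hi⟩, ⟨j, by omega⟩)) :
    SameColorConn B (⟨i, hi⟩, ⟨j, by omega⟩) (⟨i, hi⟩, ⟨j + d, hd⟩) := by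
  induction d with
  | zero => exact Relation.ReflTransGen.refl
  | succ d ih =>
    have hd' : j + d < n := by omega
    have path := ih hd' (fun j' h1 h2 h3 => hc j' h1 (by omega) h3)
    have step : SameColorConn B (⟨i, hi⟩, ⟨j + d, hd'⟩) (⟨i, hi⟩, ⟨j + (d+1), hd⟩) := by
      refine conn_step ?_ ?_
      · exact adjT_right (n := n) i (j+d) hi (by omega)
      · show B (⟨i, hi⟩, ⟨j+d, hd'⟩) = B (⟨i, hi⟩, ⟨j+d+1, by omega⟩)
        rw [hc (j+d) (by omega) (by omega) hd', hc (j+d+1) (by omega) (by omega) (by omega)]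
    exact path.trans step

lemma conn_row (B : Board n 3) (i : ℕ) (hi : i < n) (j1 j2 : ℕ) (hj : j1 ≤ j2) (h2 : j2 < n)
    (hc : ∀ j', j1 ≤ j' → j' ≤ j2 → ∀ (h : j' < n),
        B (⟨i, hi⟩, ⟨j', h⟩) = B (⟨i, hi⟩, ⟨j1, by omega⟩)) :
    SameColorConn B (⟨i, hi⟩, ⟨j1, by omega⟩) (⟨i, hi⟩, ⟨j2, h2⟩) := by
  obtain ⟨d, rfl⟩ : ∃ d, j2 = j1 + d := ⟨j2 - j1, by omega⟩
  exact conn_row_aux B i hi j1 d h2 hc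

lemma conn_col_aux (B : Board n 3) (j : ℕ) (hj : j < n) (i d : ℕ) (hd : i + d < n)
    (hc : ∀ i', i ≤ i' → i' ≤ i + d → ∀ (h : i' < n),
        B (⟨i', h⟩, ⟨j, hj⟩) = B (⟨i, by omega⟩, ⟨j, hj⟩)) :
    SameColorConn B (⟨i, by omega⟩, ⟨j, hj⟩) (⟨i + d, hd⟩, ⟨j, hj⟩) := by
  induction d with
  | zero => exact Relation.ReflTransGen.refl
  | succ d ih =>
    have hd' : i + d < n := by omega
    have path := ih hd' (fun i' h1 h2 h3 => hc i' h1 (by omega) h3)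
    have step : SameColorConn B (⟨i + d, hd'⟩, ⟨j, hj⟩) (⟨i + (d+1), hd⟩, ⟨j, hj⟩) := by
      refine conn_step ?_ ?_
      · exact adjT_down (n := n) (i+d) j (by omega) hj
      · show B (⟨i+d, hd'⟩, ⟨j, hj⟩) = B (⟨i+d+1, by omega⟩, ⟨j, hj⟩)
        rw [hc (i+d) (by omega) (by omega) hd', hc (i+d+1) (by omega) (by omega) (by omega)]
    exact path.trans step

lemma conn_col (B : Board n 3) (j : ℕ) (hj : j < n) (i1 i2 : ℕ) (hi : i1 ≤ i2) (h2 : i2 < n)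
    (hc : ∀ i', i1 ≤ i' → i' ≤ i2 → ∀ (h : i' < n),
        B (⟨i', h⟩, ⟨j, hj⟩) = B (⟨i1, by omega⟩, ⟨j, hj⟩)) :
    SameColorConn B (⟨i1, by omega⟩, ⟨j, hj⟩) (⟨i2, h2⟩, ⟨j, hj⟩) := by
  obtain ⟨d, rfl⟩ : ∃ d, i2 = i1 + d := ⟨i2 - i1, by omega⟩
  exact conn_col_aux B j hj i1 d h2 hc

lemma region_eq (B : Board n 3) (o : Tile n) (S : Set (Tile n)) (ho : o ∈ S)
    (hconn : ∀ p ∈ S, SameColorConn B o p)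
    (hclosed : ∀ p ∈ S, ∀ q, adjT p q → B p = B q → q ∈ S) :
    {p | SameColorConn B o p} = S := by
  ext p
  simp only [Set.mem_setOf_eq]
  constructor
  · intro h
    induction h with
    | refl => exact ho
    | tail _ h ih => exact hclosed _ ih _ h.1 h.2
  · exact hconn p

def oo (hn : 4 ≤ n) : Tile n := (⟨0, Nat.lt_of_lt_of_le (by decide) hn⟩, ⟨0, Nat.lt_of_lt_of_le (by decide) hn⟩)

lemma adjT_bound {p q : Tile n} (h : adjT p q) :
    q.1.val ≤ p.1.val + 1 := by
  unfold adjT at h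
  omega

lemma hubP_mk (a b : Fin n) : hubP n (a, b) ↔ (1 ≤ a.val ∧ a.val ≤ n-2 ∧ b.val = 0) :=
  Iff.rfl

lemma mem_Rt (a b : Fin n) (t : ℕ) :
    (a, b) ∈ Rt n t ↔ (a.val ≤ t ∧ ¬(1 ≤ a.val ∧ a.val ≤ n-2 ∧ b.val = 0)) := Iff.rfl

lemma oo_mem_Rt (hn : 4 ≤ n) (t : ℕ) : oo hn ∈ Rt n t := by
  rw [oo, mem_Rt]
  simp only [Fin.val_mk]
  omega

/-- paths inside `Rt` for any board constant on `Rt` -/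
lemma conn_Rt (hn : 4 ≤ n) (t : ℕ) (ht : t ≤ n - 1) (B : Board n 3)
    (hconst : ∀ p ∈ Rt n t, B p = B (oo hn)) :
    ∀ p ∈ Rt n t, SameColorConn B (oo hn) p := by
  rintro ⟨pi, pj⟩ hpmem
  have hp := hpmem
  rw [mem_Rt] at hp
  have hRrow0 : ∀ j (hj : j < n), ((⟨0, by omega⟩ : Fin n), (⟨j, hj⟩ : Fin n)) ∈ Rt n t := by
    intro j hj; rw [mem_Rt]; simp only [Fin.val_mk]; omega
  by_cases hj0 : pj.val = 0
  · by_cases hi0 : pi.val = 0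
    · have : (pi, pj) = oo hn := by
        unfold oo; ext <;> simpa
      rw [this]
      exact Relation.ReflTransGen.refl
    · -- pi = n-1, t = n-1
      have hpi : pi.val = n - 1 := by omega
      have hR1 : ∀ i (hi : i < n), ((⟨i, hi⟩ : Fin n), (⟨1, by omega⟩ : Fin n)) ∈ Rt n t := by
        intro i hi; rw [mem_Rt]; simp only [Fin.val_mk]; omega
      have p1 : SameColorConn B (oo hn) (⟨0, by omega⟩, ⟨1, by omega⟩) := by
        refine conn_row B 0 (by omega) 0 1 (by omega) (by omega) ?_
        intro j' h1 h2 h3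
        rw [hconst _ (hRrow0 j' h3), hconst _ (hRrow0 0 (by omega))]
      have p2 : SameColorConn B (⟨0, by omega⟩, ⟨1, by omega⟩) (⟨n-1, by omega⟩, ⟨1, by omega⟩) := by
        refine conn_col B 1 (by omega) 0 (n-1) (by omega) (by omega) ?_
        intro i' h1 h2 h3
        rw [hconst _ (hR1 i' h3), hconst _ (hR1 0 (by omega))]
      have p3 : SameColorConn B (⟨n-1, by omega⟩, ⟨1, by omega⟩) (pi, pj) := by
        refine conn_step ?_ ?_
        · unfold adjT
          simp only [Fin.val_mk]
          omega
        · rw [hconst _ (hR1 (n-1) (by omega)), hconst _ hpmem]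
      exact (p1.trans p2).trans p3
  · -- pj ≥ 1 : go along row 0 then down column pj
    have hRcol : ∀ i (hi : i < n), i ≤ t → ((⟨i, hi⟩ : Fin n), pj) ∈ Rt n t := by
      intro i hi hit; rw [mem_Rt]; simp only [Fin.val_mk]; omega
    have p1 : SameColorConn B (oo hn) (⟨0, by omega⟩, ⟨pj.val, pj.isLt⟩) := by
      refine conn_row B 0 (by omega) 0 pj.val (by omega) pj.isLt ?_
      intro j' h1 h2 h3
      rw [hconst _ (hRrow0 j' h3), hconst _ (hRrow0 0 (by omega))]
    have p2 : SameColorConn B (⟨0, by omega⟩, ⟨pj.val, pj.isLt⟩) (⟨pi.val, pi.isLt⟩, ⟨pj.val, pj.isLt⟩) := by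
      refine conn_col B pj.val pj.isLt 0 pi.val (by omega) pi.isLt ?_
      intro i' h1 h2 h3
      have m1 : ((⟨i', h3⟩ : Fin n), (⟨pj.val, pj.isLt⟩ : Fin n)) ∈ Rt n t := hRcol i' h3 (by omega)
      have m2 : ((⟨0, by omega⟩ : Fin n), (⟨pj.val, pj.isLt⟩ : Fin n)) ∈ Rt n t := hRcol 0 (by omega) (by omega)
      rw [hconst _ m1, hconst _ m2]
    exact p1.trans (by exact p2)

lemma mem_Rt' (p : Tile n) (t : ℕ) :
    p ∈ Rt n t ↔ (p.1.val ≤ t ∧ ¬(1 ≤ p.1.val ∧ p.1.val ≤ n-2 ∧ p.2.val = 0)) := Iff.rfl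

lemma mem_Hub' (p : Tile n) :
    p ∈ Hub n ↔ (1 ≤ p.1.val ∧ p.1.val ≤ n-2 ∧ p.2.val = 0) := Iff.rfl

lemma hubP' (p : Tile n) : hubP n p ↔ (1 ≤ p.1.val ∧ p.1.val ≤ n-2 ∧ p.2.val = 0) := Iff.rfl

lemma myB_nonhub (p : Tile n) (h : ¬ hubP n p) : myB n p = par p.1.val := if_neg h

lemma myB_hub (p : Tile n) (h : hubP n p) : myB n p = 0 := if_pos h

instance (t : ℕ) (p : Tile n) : Decidable (p ∈ Rt n t) :=
  decidable_of_iff _ (mem_Rt' p t).symm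

instance (p : Tile n) : Decidable (p ∈ Hub n) :=
  decidable_of_iff _ (mem_Hub' p).symm

/-- region of a board that recolours `Rt` with a colour `c ∉ {0}` that avoids
the next chamber colour -/
lemma regionRt (hn : 4 ≤ n) (t : ℕ) (ht : t ≤ n - 1) (c : Fin 3) (hc0 : c ≠ 0)
    (hc1 : t = n - 1 ∨ c ≠ par (t+1)) :
    {p | SameColorConn (fun p => if p ∈ Rt n t then c else myB n p) (oo hn) p} = Rt n t := by
  set Bc : Board n 3 := fun p => if p ∈ Rt n t then c else myB n p with hBc
  have hval : ∀ p ∈ Rt n t, Bc p = c := fun p hp => if_pos hp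
  refine region_eq Bc (oo hn) (Rt n t) (oo_mem_Rt hn t) ?_ ?_
  · exact conn_Rt hn t ht Bc (fun p hp => by
      rw [hval p hp, hval _ (oo_mem_Rt hn t)])
  · intro p hp q hadj hcol
    by_contra hq
    rw [hval p hp] at hcol
    have hqval : Bc q = myB n q := if_neg hq
    rw [hqval] at hcol
    by_cases hhub : hubP n q
    · rw [myB_hub q hhub] at hcol
      exact hc0 hcol
    · rw [myB_nonhub q hhub] at hcol
      have h1 : q.1.val ≤ p.1.val + 1 := adjT_bound hadj
      have hpm := (mem_Rt' p t).mp hp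
      rw [mem_Rt'] at hq
      rw [hubP'] at hhub
      have hq1 : q.1.val = t + 1 := by omega
      rcases hc1 with h | h
      · have := q.1.isLt; omega
      · rw [hq1] at hcol; exact h hcol

/-- region after flooding `Rt` with colour 0 : picks up the hub -/
lemma regionHub (hn : 4 ≤ n) (t : ℕ) (ht : t ≤ n - 1) :
    {p | SameColorConn (fun p => if p ∈ Rt n t then (0 : Fin 3) else myB n p) (oo hn) p}
      = Rt n t ∪ Hub n := by
  set Bc : Board n 3 := fun p => if p ∈ Rt n t then (0 : Fin 3) else myB n p with hBc
  have hRt0 : ∀ p ∈ Rt n t, Bc p = 0 := fun p hp => if_pos hp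
  have hHub0 : ∀ p ∈ Hub n, Bc p = 0 := by
    intro p hp
    have h1 : p ∉ Rt n t := by
      rw [mem_Hub'] at hp; rw [mem_Rt']; omega
    show (if p ∈ Rt n t then (0:Fin 3) else myB n p) = 0
    rw [if_neg h1, myB_hub p ((hubP' p).mpr hp)]
  refine region_eq Bc (oo hn) _ (Or.inl (oo_mem_Rt hn t)) ?_ ?_
  · rintro p (hp | hp)
    · exact conn_Rt hn t ht Bc (fun q hq => by rw [hRt0 q hq, hRt0 _ (oo_mem_Rt hn t)]) p hp
    · -- hub cell : go down column 0
      obtain ⟨a, b⟩ := p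
      rw [mem_Hub'] at hp
      simp only at hp
      have hb : b = ⟨0, by omega⟩ := Fin.ext hp.2.2
      rw [hb]
      have hcells : ∀ i (hi : i < n), i ≤ a.val →
          Bc (⟨i, hi⟩, ⟨0, by omega⟩) = Bc (⟨0, by omega⟩, ⟨0, by omega⟩) := by
        intro i hi hia
        rcases Nat.eq_zero_or_pos i with h0 | h0
        · subst h0; rfl
        · have e1 : Bc (⟨0, by omega⟩, ⟨0, by omega⟩) = 0 := hRt0 _ (oo_mem_Rt hn t)
          have e2 : Bc (⟨i, hi⟩, ⟨0, by omega⟩) = 0 := by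
            exact hHub0 _ ⟨by show 1 ≤ i; omega, by show i ≤ n - 2; omega, rfl⟩
          rw [e1, e2]
      have := conn_col Bc 0 (by omega) 0 a.val (by omega) a.isLt
        (fun i' h1 h2 h3 => hcells i' h3 h2)
      exact this
  · intro p hp q hadj hcol
    have hp0 : Bc p = 0 := by rcases hp with h | h; exacts [hRt0 p h, hHub0 p h]
    rw [hp0] at hcol
    by_contra hq
    simp only [Set.mem_union, not_or] at hq
    obtain ⟨hq1, hq2⟩ := hq
    have hqh : ¬ hubP n q := fun h => hq2 ((mem_Hub' q).mpr ((hubP' q).mp h))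
    have : Bc q = par q.1.val := by
      show (if q ∈ Rt n t then (0:Fin 3) else myB n q) = _
      rw [if_neg hq1, myB_nonhub q hqh]
    rw [this] at hcol
    exact par_ne_zero _ hcol.symm

/-- region of a constant board is everything -/
lemma region_const (hn : 4 ≤ n) (c : Fin 3) :
    {p | SameColorConn (fun _ => c) (oo hn) p} = Set.univ := by
  refine region_eq _ (oo hn) _ (Set.mem_univ _) ?_ (fun _ _ _ _ _ => Set.mem_univ _)
  rintro ⟨a, b⟩ -
  have p1 : SameColorConn (fun _ => c) (oo hn) (⟨0, by omega⟩, ⟨b.val, b.isLt⟩) :=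
    conn_row _ 0 (by omega) 0 b.val (by omega) b.isLt (fun _ _ _ _ => rfl)
  have p2 : SameColorConn (fun _ => c) (⟨0, by omega⟩, ⟨b.val, b.isLt⟩)
      (⟨a.val, a.isLt⟩, ⟨b.val, b.isLt⟩) :=
    conn_col _ b.val b.isLt 0 a.val (by omega) a.isLt (fun _ _ _ _ => rfl)
  exact p1.trans p2

instance (t : ℕ) (p : Tile n) : Decidable (p ∈ Rt n t ∪ Hub n) :=
  decidable_of_iff (p ∈ Rt n t ∨ p ∈ Hub n) (Set.mem_union p _ _).symm

def S2 (n : ℕ) : Set (Tile n) := {p | p.1.val = 0 ∨ hubP n p ∨ p.1.val % 2 = 1}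

lemma mem_S2 (p : Tile n) :
    p ∈ S2 n ↔ (p.1.val = 0 ∨ (1 ≤ p.1.val ∧ p.1.val ≤ n-2 ∧ p.2.val = 0) ∨ p.1.val % 2 = 1) :=
  Iff.rfl

lemma regionS2 (hn : 4 ≤ n) :
    {p | SameColorConn (fun p => if p ∈ Rt n 0 ∪ Hub n then (1 : Fin 3) else myB n p) (oo hn) p}
      = S2 n := by
  set E : Board n 3 := fun p => if p ∈ Rt n 0 ∪ Hub n then (1 : Fin 3) else myB n p with hE
  have hE1 : ∀ p ∈ S2 n, E p = 1 := by
    intro p hp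
    rw [mem_S2] at hp
    by_cases hm : p ∈ Rt n 0 ∪ Hub n
    · exact if_pos hm
    · have hh : ¬ hubP n p := fun h => hm (Or.inr ((mem_Hub' p).mpr ((hubP' p).mp h)))
      have h0 : p.1.val ≠ 0 := by
        intro h
        refine hm (Or.inl ((mem_Rt' p 0).mpr ⟨by omega, ?_⟩))
        rw [hubP'] at hh
        omega
      have hodd : p.1.val % 2 = 1 := by
        rw [hubP'] at hh
        rcases hp with h | h | h
        · omega
        · omega
        · exact h
      show (if p ∈ Rt n 0 ∪ Hub n then (1:Fin 3) else myB n p) = 1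
      rw [if_neg hm, myB_nonhub p hh, par, if_pos hodd]
  refine region_eq E (oo hn) _ ?_ ?_ ?_
  · rw [mem_S2]; left; rfl
  · rintro ⟨a, b⟩ hp
    have hmemS2 : ∀ i (hi : i < n), i ≤ a.val → ((⟨i, hi⟩ : Fin n), (⟨0, by omega⟩ : Fin n)) ∈ S2 n := by
      intro i hi hia
      show i = 0 ∨ (1 ≤ i ∧ i ≤ n - 2 ∧ 0 = 0) ∨ i % 2 = 1
      rcases Nat.eq_zero_or_pos i with h0 | h0
      · left; omega
      · by_cases hle : i ≤ n - 2
        · right; left; omega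
        · -- i = n-1 = a.val, so a.val odd from hp
          have hie : i = n - 1 := by omega
          have hae : a.val = n - 1 := by have := a.isLt; omega
          have hp' : a.val = 0 ∨ (1 ≤ a.val ∧ a.val ≤ n-2 ∧ b.val = 0) ∨ a.val % 2 = 1 := hp
          rcases hp' with h | h | h
          · omega
          · omega
          · right; right; omega
    have p1 : SameColorConn E (oo hn) (⟨a.val, a.isLt⟩, ⟨0, by omega⟩) := by
      refine conn_col E 0 (by omega) 0 a.val (by omega) a.isLt ?_
      intro i' h1 h2 h3
      have e1 : E (⟨i', h3⟩, ⟨0, by omega⟩) = 1 := hE1 _ (hmemS2 i' h3 h2)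
      have e2 : E (⟨0, by omega⟩, ⟨0, by omega⟩) = 1 := hE1 _ (hmemS2 0 (by omega) (by omega))
      rw [e1, e2]
    have hmemRow : ∀ j (hj : j < n), j ≤ b.val → ((⟨a.val, a.isLt⟩ : Fin n), (⟨j, hj⟩ : Fin n)) ∈ S2 n := by
      intro j hj hjb
      show a.val = 0 ∨ (1 ≤ a.val ∧ a.val ≤ n - 2 ∧ j = 0) ∨ a.val % 2 = 1
      have hp' : a.val = 0 ∨ (1 ≤ a.val ∧ a.val ≤ n-2 ∧ b.val = 0) ∨ a.val % 2 = 1 := hp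
      rcases hp' with h | h | h
      · left; exact h
      · -- hub : b.val = 0 so j = 0
        right; left; omega
      · right; right; exact h
    have p2 : SameColorConn E (⟨a.val, a.isLt⟩, ⟨0, by omega⟩) (⟨a.val, a.isLt⟩, ⟨b.val, b.isLt⟩) := by
      refine conn_row E a.val a.isLt 0 b.val (by omega) b.isLt ?_
      intro j' h1 h2 h3
      have e1 : E (⟨a.val, a.isLt⟩, ⟨j', h3⟩) = 1 := hE1 _ (hmemRow j' h3 h2)
      have e2 : E (⟨a.val, a.isLt⟩, ⟨0, by omega⟩) = 1 := hE1 _ (hmemRow 0 (by omega) (by omega))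
      rw [e1, e2]
    exact p1.trans p2
  · intro p hp q hadj hcol
    rw [hE1 p hp] at hcol
    by_contra hq
    rw [mem_S2] at hq
    push_neg at hq
    obtain ⟨h0, hh, hev⟩ := hq
    have hqm : q ∉ Rt n 0 ∪ Hub n := by
      rintro (h | h)
      · rw [mem_Rt'] at h; omega
      · rw [mem_Hub'] at h; exact hh h.1 h.2.1 h.2.2
    have : E q = par q.1.val := by
      show (if q ∈ Rt n 0 ∪ Hub n then (1:Fin 3) else myB n q) = _
      refine (if_neg hqm).trans (myB_nonhub q ?_)
      intro h
      rw [hubP'] at h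
      exact hh h.1 h.2.1 h.2.2
    rw [this, par, if_neg (by omega)] at hcol
    exact absurd hcol (by decide)

lemma flood_congr {B : Board n 3} {o : Tile n} {k : Fin 3} {S : Set (Tile n)}
    [∀ p : Tile n, Decidable (p ∈ S)]
    (h : {p | SameColorConn B o p} = S) :
    flood B o k = fun p => if p ∈ S then k else B p := by
  classical
  funext p
  have hiff : SameColorConn B o p ↔ p ∈ S := by rw [← h]; rfl
  show (if SameColorConn B o p then k else B p) = _
  by_cases hp : p ∈ S
  · rw [if_pos (hiff.mpr hp), if_pos hp]
  · rw [if_neg (fun hc => hp (hiff.mp hc)), if_neg hp]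

lemma regionSize_congr {B : Board n 3} {o : Tile n} {S : Set (Tile n)}
    (h : {p | SameColorConn B o p} = S) : regionSize B o = S.ncard := by
  rw [regionSize, h]

lemma flood_self {B : Board n 3} {o : Tile n} {k : Fin 3} (h : B o = k) :
    flood B o k = B := by
  classical
  funext p
  show (if SameColorConn B o p then k else B p) = B p
  by_cases hc : SameColorConn B o p
  · rw [if_pos hc, ← conn_colour hc, h]
  · rw [if_neg hc]

def Bt (n t : ℕ) : Board n 3 := fun p => if p ∈ Rt n t then par t else myB n p

lemma if_Rt_else_Bt (t : ℕ) (c : Fin 3) :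
    (fun p => if p ∈ Rt n t then c else Bt n t p)
      = fun p => if p ∈ Rt n t then c else myB n p := by
  funext p
  by_cases hp : p ∈ Rt n t
  · rw [if_pos hp, if_pos hp]
  · rw [if_neg hp, if_neg hp]
    show (if p ∈ Rt n t then par t else myB n p) = myB n p
    rw [if_neg hp]

lemma Bt_zero : Bt n 0 = myB n := by
  funext p
  show (if p ∈ Rt n 0 then par 0 else myB n p) = myB n p
  by_cases hp : p ∈ Rt n 0
  · rw [if_pos hp, myB_nonhub p (fun hh => ((mem_Rt' p 0).mp hp).2 ((hubP' p).mp hh))]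
    have h0 : p.1.val = 0 := Nat.le_zero.mp ((mem_Rt' p 0).mp hp).1
    rw [h0]
  · rw [if_neg hp]

lemma region_Bt (hn : 4 ≤ n) (t : ℕ) (ht : t ≤ n - 1) :
    {p | SameColorConn (Bt n t) (oo hn) p} = Rt n t :=
  regionRt hn t ht (par t) (par_ne_zero t) (Or.inr (Ne.symm (par_succ_ne t)))

lemma Rt_mono {t : ℕ} (p : Tile n) (hp : p ∈ Rt n t) : p ∈ Rt n (t+1) := by
  rw [mem_Rt'] at hp ⊢; omega

lemma flood_next (hn : 4 ≤ n) (t : ℕ) (ht : t ≤ n - 2) :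
    flood (Bt n t) (oo hn) (par (t+1)) = Bt n (t+1) := by
  rw [flood_congr (region_Bt hn t (by omega)), if_Rt_else_Bt]
  funext p
  show (if p ∈ Rt n t then par (t+1) else myB n p) = Bt n (t+1) p
  by_cases hp : p ∈ Rt n t
  · rw [if_pos hp]
    show _ = (if p ∈ Rt n (t+1) then par (t+1) else myB n p)
    rw [if_pos (Rt_mono p hp)]
  · rw [if_neg hp]
    show myB n p = (if p ∈ Rt n (t+1) then par (t+1) else myB n p)
    by_cases hp1 : p ∈ Rt n (t+1)
    · rw [if_pos hp1, myB_nonhub p (fun hh => ((mem_Rt' p (t+1)).mp hp1).2 ((hubP' p).mp hh))]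
      have h1 : p.1.val = t + 1 := by
        have := (mem_Rt' p (t+1)).mp hp1
        rw [mem_Rt'] at hp
        omega
      rw [h1]
    · rw [if_neg hp1]

lemma flood_zero_region (hn : 4 ≤ n) (t : ℕ) (ht : t ≤ n - 1) :
    regionSize (flood (Bt n t) (oo hn) 0) (oo hn) = (Rt n t ∪ Hub n).ncard := by
  rw [flood_congr (region_Bt hn t ht), if_Rt_else_Bt]
  exact regionSize_congr (regionHub hn t ht)

lemma flood_cur (hn : 4 ≤ n) (t : ℕ) :
    flood (Bt n t) (oo hn) (par t) = Bt n t :=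
  flood_self (if_pos (oo_mem_Rt hn t))

lemma flood_last_zero (hn : 4 ≤ n) :
    flood (Bt n (n-1)) (oo hn) 0 = fun _ => (0 : Fin 3) := by
  rw [flood_congr (region_Bt hn (n-1) (by omega)), if_Rt_else_Bt]
  funext p
  show (if p ∈ Rt n (n-1) then (0:Fin 3) else myB n p) = 0
  by_cases hp : p ∈ Rt n (n-1)
  · rw [if_pos hp]
  · rw [if_neg hp]
    have hh : hubP n p := by
      rw [mem_Rt'] at hp
      rw [hubP']
      have := p.1.isLt
      omega
    rw [myB_hub p hh]

lemma flood_last_parn (hn : 4 ≤ n) :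
    regionSize (flood (Bt n (n-1)) (oo hn) (par n)) (oo hn) = (Rt n (n-1)).ncard := by
  rw [flood_congr (region_Bt hn (n-1) (by omega)), if_Rt_else_Bt]
  refine regionSize_congr (regionRt hn (n-1) (by omega) (par n) (par_ne_zero n) (Or.inl rfl))

instance (p : Tile n) : Decidable (p ∈ S2 n) :=
  decidable_of_iff _ (mem_S2 p).symm

lemma region_myB (hn : 4 ≤ n) : {p | SameColorConn (myB n) (oo hn) p} = Rt n 0 := by
  rw [← Bt_zero]; exact region_Bt hn 0 (by omega)

lemma playMoves_012 (hn : 4 ≤ n) :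
    Flooded (playMoves (oo hn) (myB n) [0, 1, 2]) := by
  have h1 : flood (myB n) (oo hn) 0 = fun p => if p ∈ Rt n 0 then (0:Fin 3) else myB n p :=
    flood_congr (region_myB hn)
  have h2 : flood (fun p => if p ∈ Rt n 0 then (0:Fin 3) else myB n p) (oo hn) 1
      = fun p => if p ∈ Rt n 0 ∪ Hub n then (1:Fin 3) else myB n p := by
    rw [flood_congr (regionHub hn 0 (by omega))]
    funext p
    by_cases hp : p ∈ Rt n 0 ∪ Hub n
    · rw [if_pos hp, if_pos hp]
    · rw [if_neg hp, if_neg hp, if_neg (fun h => hp (Or.inl h))]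
  have h3 : flood (fun p => if p ∈ Rt n 0 ∪ Hub n then (1:Fin 3) else myB n p) (oo hn) 2
      = fun p => if p ∈ S2 n then (2:Fin 3) else
          (if p ∈ Rt n 0 ∪ Hub n then (1:Fin 3) else myB n p) :=
    flood_congr (regionS2 hn)
  have hfin : ∀ p, playMoves (oo hn) (myB n) [0, 1, 2] p = 2 := by
    intro p
    show flood (flood (flood (myB n) (oo hn) 0) (oo hn) 1) (oo hn) 2 p = 2
    rw [h1, h2, h3]
    show (if p ∈ S2 n then (2:Fin 3) else (if p ∈ Rt n 0 ∪ Hub n then (1:Fin 3) else myB n p)) = 2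
    by_cases hp : p ∈ S2 n
    · rw [if_pos hp]
    · rw [if_neg hp]
      have hnm : p ∉ Rt n 0 ∪ Hub n := by
        rintro (h | h)
        · exact hp (Or.inl (by rw [mem_Rt'] at h; omega))
        · exact hp (Or.inr (Or.inl ((hubP' p).mpr ((mem_Hub' p).mp h))))
      rw [if_neg hnm]
      have hh : ¬ hubP n p := fun h => hp (Or.inr (Or.inl h))
      rw [myB_nonhub p hh, par, if_neg ?_]
      intro hodd
      exact hp (Or.inr (Or.inr hodd))
  intro p q
  rw [hfin p, hfin q]

lemma flood_o {B : Board n 3} {o : Tile n} {k : Fin 3} : flood B o k o = k := by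
  classical
  show (if SameColorConn B o o then k else B o) = k
  exact if_pos (show SameColorConn B o o from Relation.ReflTransGen.refl)

lemma lastColour (o : Tile n) :
    ∀ (ms : List (Fin 3)) (B : Board n 3), ms ≠ [] →
      ∃ k ∈ ms, playMoves o B ms o = k := by
  intro ms
  induction ms with
  | nil => intro B h; exact absurd rfl h
  | cons k ks ih =>
    intro B _
    rcases List.eq_nil_or_concat ks with h | _
    · subst h
      exact ⟨k, by simp, flood_o⟩
    · by_cases hks : ks = []
      · subst hks; exact ⟨k, by simp, flood_o⟩
      · obtain ⟨k', hk', he⟩ := ih (flood B o k) hks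
        exact ⟨k', by simp [hk'], he⟩

lemma untouched (o p : Tile n) :
    ∀ (ms : List (Fin 3)) (B : Board n 3), ¬ SameColorConn B o p →
      (∀ k ∈ ms, k ≠ B p) → playMoves o B ms p = B p := by
  intro ms
  induction ms with
  | nil => intro B _ _; rfl
  | cons k ks ih =>
    intro B hnc hk
    classical
    have hBp : flood B o k p = B p := by
      show (if SameColorConn B o p then k else B p) = B p
      rw [if_neg hnc]
    have hnc' : ¬ SameColorConn (flood B o k) o p := by
      intro hc
      have := conn_colour hc
      rw [flood_o, hBp] at this
      exact hk k (by simp) this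
    have : playMoves o (flood B o k) ks p = flood B o k p :=
      ih (flood B o k) hnc' (by intro k' hk'; rw [hBp]; exact hk k' (by simp [hk']))
    show playMoves o (flood B o k) ks p = B p
    rw [this, hBp]

lemma exists_missing (ms : List (Fin 3)) (h : ms.length ≤ 2) :
    ∃ c : Fin 3, ∀ k ∈ ms, k ≠ c := by
  by_contra hc
  push_neg at hc
  have hsub : (Finset.univ : Finset (Fin 3)) ⊆ ms.toFinset := by
    intro c _
    obtain ⟨k, hk, he⟩ := hc c
    rw [List.mem_toFinset]
    exact he ▸ hk
  have h1 : (3 : ℕ) ≤ ms.toFinset.card := by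
    have := Finset.card_le_card hsub
    simpa using this
  have h2 := ms.toFinset_card_le
  omega

lemma myB_oo (hn : 4 ≤ n) : myB n (oo hn) = 2 := by
  have : ¬ hubP n (oo hn) := by rw [hubP', oo]; simp
  rw [myB_nonhub _ this]
  rfl

lemma not_flooded_myB (hn : 4 ≤ n) : ¬ Flooded (myB n) := by
  intro h
  have h10 : hubP n ((⟨1, by omega⟩ : Fin n), (⟨0, by omega⟩ : Fin n)) :=
    ⟨by show (1:ℕ) ≤ 1; omega, by show (1:ℕ) ≤ n - 2; omega, rfl⟩
  have := h (oo hn) (⟨1, by omega⟩, ⟨0, by omega⟩)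
  rw [myB_oo hn, myB_hub _ h10] at this
  exact absurd this (by decide)

lemma floodMoves_myB (hn : 4 ≤ n) : floodMoves (myB n) (oo hn) = 3 := by
  have h3 : 3 ∈ {l : ℕ | ∃ ms : List (Fin 3), ms.length = l ∧ Flooded (playMoves (oo hn) (myB n) ms)} :=
    ⟨[0,1,2], rfl, playMoves_012 hn⟩
  refine le_antisymm (Nat.sInf_le h3) (le_csInf ⟨3, h3⟩ ?_)
  rintro l ⟨ms, hlen, hfl⟩
  by_contra hlt
  push_neg at hlt
  have hle : ms.length ≤ 2 := by omega
  have hne : ms ≠ [] := by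
    intro h; subst h; exact not_flooded_myB hn hfl
  obtain ⟨c, hc⟩ := exists_missing ms hle
  -- pick a witness tile of colour c, not initially connected to the origin
  have hwit : ∃ p : Tile n, myB n p = c ∧ ¬ SameColorConn (myB n) (oo hn) p := by
    have hcv : c = 0 ∨ c = 1 ∨ c = 2 := by
      have h : c.val = 0 ∨ c.val = 1 ∨ c.val = 2 := by omega
      rcases h with h | h | h
      · exact Or.inl (Fin.ext h)
      · exact Or.inr (Or.inl (Fin.ext h))
      · exact Or.inr (Or.inr (Fin.ext h))
    have hreg : ∀ p : Tile n, SameColorConn (myB n) (oo hn) p → p ∈ Rt n 0 := by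
      intro p hp
      have := region_myB hn
      rw [← this]; exact hp
    rcases hcv with h | h | h
    · refine ⟨(⟨1, by omega⟩, ⟨0, by omega⟩), ?_, ?_⟩
      · rw [myB_hub _ ⟨by show (1:ℕ) ≤ 1; omega, by show (1:ℕ) ≤ n - 2; omega, rfl⟩, h]
      · intro hcc
        have := hreg _ hcc
        rw [mem_Rt'] at this
        simp only [Fin.val_mk] at this
        omega
    · refine ⟨(⟨1, by omega⟩, ⟨1, by omega⟩), ?_, ?_⟩
      · rw [myB_nonhub _ (by intro hh; exact absurd hh.2.2 (by show ¬((1:ℕ) = 0); omega)), h]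
        show par 1 = 1
        simp [par]
      · intro hcc
        have := hreg _ hcc
        rw [mem_Rt'] at this
        simp only [Fin.val_mk] at this
        omega
    · refine ⟨(⟨2, by omega⟩, ⟨1, by omega⟩), ?_, ?_⟩
      · rw [myB_nonhub _ (by intro hh; exact absurd hh.2.2 (by show ¬((1:ℕ) = 0); omega)), h]
        show par 2 = 2
        simp [par]
      · intro hcc
        have := hreg _ hcc
        rw [mem_Rt'] at this
        simp only [Fin.val_mk] at this
        omega
  obtain ⟨p, hpc, hpnc⟩ := hwit
  have hp_end : playMoves (oo hn) (myB n) ms p = c := by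
    rw [untouched (oo hn) p ms (myB n) hpnc (by intro k hk; rw [hpc]; exact hc k hk), hpc]
  obtain ⟨k, hkms, hk_end⟩ := lastColour (oo hn) ms (myB n) hne
  have := hfl (oo hn) p
  rw [hk_end, hp_end] at this
  exact hc k hkms this

/-! ### counting -/

lemma ncard_val_interval (a b : ℕ) (hb : b < n) :
    ({i : Fin n | a ≤ i.val ∧ i.val ≤ b}).ncard = b + 1 - a := by
  have himg : Fin.val '' {i : Fin n | a ≤ i.val ∧ i.val ≤ b} = Set.Icc a b := by
    ext m
    simp only [Set.mem_image, Set.mem_setOf_eq, Set.mem_Icc]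
    constructor
    · rintro ⟨i, ⟨h1, h2⟩, rfl⟩; exact ⟨h1, h2⟩
    · rintro ⟨h1, h2⟩; exact ⟨⟨m, by omega⟩, ⟨h1, h2⟩, rfl⟩
  have := Set.ncard_image_of_injective {i : Fin n | a ≤ i.val ∧ i.val ≤ b} Fin.val_injective
  rw [himg] at this
  rw [← this, ← Finset.coe_Icc, Set.ncard_coe_finset, Nat.card_Icc]

lemma ncard_Hub (hn : 4 ≤ n) : (Hub n).ncard = n - 2 := by
  have himg : (fun i : Fin n => (i, (⟨0, by omega⟩ : Fin n))) ''
      {i : Fin n | 1 ≤ i.val ∧ i.val ≤ n - 2} = Hub n := by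
    ext p
    simp only [Set.mem_image, Set.mem_setOf_eq, mem_Hub']
    constructor
    · rintro ⟨i, ⟨h1, h2⟩, rfl⟩; exact ⟨h1, h2, rfl⟩
    · rintro ⟨h1, h2, h3⟩
      exact ⟨p.1, ⟨h1, h2⟩, by rw [Prod.ext_iff]; exact ⟨rfl, Fin.ext h3.symm⟩⟩
  have hinj : Function.Injective (fun i : Fin n => (i, (⟨0, by omega⟩ : Fin n))) := by
    intro a b h
    exact congrArg Prod.fst h
  rw [← himg, Set.ncard_image_of_injective _ hinj, ncard_val_interval 1 (n-2) (by omega)]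
  omega

def Row (n t : ℕ) : Set (Tile n) := {p | p.1.val = t ∧ ¬ hubP n p}

lemma ncard_Row_mid (hn : 4 ≤ n) (t : ℕ) (h1 : 1 ≤ t) (h2 : t ≤ n - 2) :
    (Row n t).ncard = n - 1 := by
  have himg : (fun j : Fin n => ((⟨t, by omega⟩ : Fin n), j)) ''
      {j : Fin n | 1 ≤ j.val ∧ j.val ≤ n - 1} = Row n t := by
    ext p
    simp only [Set.mem_image, Set.mem_setOf_eq]
    constructor
    · rintro ⟨j, ⟨hj1, hj2⟩, rfl⟩
      refine ⟨rfl, ?_⟩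
      rw [hubP']
      simp only [Fin.val_mk]
      omega
    · rintro ⟨hp1, hp2⟩
      rw [hubP'] at hp2
      refine ⟨p.2, ⟨by omega, by have := p.2.isLt; omega⟩, ?_⟩
      rw [Prod.ext_iff]
      exact ⟨Fin.ext hp1.symm, rfl⟩
  have hinj : Function.Injective (fun j : Fin n => ((⟨t, by omega⟩ : Fin n), j)) := by
    intro a b h
    exact congrArg Prod.snd h
  rw [← himg, Set.ncard_image_of_injective _ hinj, ncard_val_interval 1 (n-1) (by omega)]
  omega

lemma ncard_Row_last (hn : 4 ≤ n) : (Row n (n-1)).ncard = n := by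
  have himg : (fun j : Fin n => ((⟨n-1, by omega⟩ : Fin n), j)) ''
      (Set.univ : Set (Fin n)) = Row n (n-1) := by
    ext p
    simp only [Set.mem_image, Set.mem_univ, true_and]
    constructor
    · rintro ⟨j, rfl⟩
      refine ⟨rfl, ?_⟩
      rw [hubP']
      simp only [Fin.val_mk]
      omega
    · rintro ⟨hp1, hp2⟩
      exact ⟨p.2, by rw [Prod.ext_iff]; exact ⟨Fin.ext hp1.symm, rfl⟩⟩
  have hinj : Function.Injective (fun j : Fin n => ((⟨n-1, by omega⟩ : Fin n), j)) := by
    intro a b h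
    exact congrArg Prod.snd h
  rw [← himg, Set.ncard_image_of_injective _ hinj, Set.ncard_univ]
  simp

lemma Rt_disj_Hub (t : ℕ) : Disjoint (Rt n t) (Hub n) := by
  rw [Set.disjoint_left]
  intro p hp hh
  rw [mem_Rt'] at hp
  rw [mem_Hub'] at hh
  omega

lemma Rt_disj_Row (t : ℕ) : Disjoint (Rt n t) (Row n (t+1)) := by
  rw [Set.disjoint_left]
  intro p hp hh
  rw [mem_Rt'] at hp
  have := hh.1
  omega

lemma Rt_succ (t : ℕ) : Rt n (t+1) = Rt n t ∪ Row n (t+1) := by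
  ext p
  rw [mem_Rt', Set.mem_union, mem_Rt']
  constructor
  · rintro ⟨h1, h2⟩
    by_cases h : p.1.val ≤ t
    · exact Or.inl ⟨h, h2⟩
    · exact Or.inr ⟨by omega, fun hh => h2 ((hubP' p).mp hh)⟩
  · rintro (⟨h1, h2⟩ | ⟨h1, h2⟩)
    · exact ⟨by omega, h2⟩
    · exact ⟨by omega, fun hh => h2 ((hubP' p).mpr hh)⟩

lemma ncard_Rt_hub (hn : 4 ≤ n) (t : ℕ) :
    (Rt n t ∪ Hub n).ncard = (Rt n t).ncard + (n - 2) := by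
  rw [Set.ncard_union_eq (Rt_disj_Hub t), ncard_Hub hn]

lemma ncard_Rt_succ (hn : 4 ≤ n) (t : ℕ) (ht : t ≤ n - 2) :
    (Rt n t).ncard + (n - 1) ≤ (Rt n (t+1)).ncard := by
  rw [Rt_succ, Set.ncard_union_eq (Rt_disj_Row t)]
  by_cases h : t + 1 ≤ n - 2
  · rw [ncard_Row_mid hn (t+1) (by omega) h]
  · have he : t + 1 = n - 1 := by omega
    rw [he, ncard_Row_last hn]
    omega

/-! ### greedy gains -/

lemma gain_mid (hn : 4 ≤ n) (t : ℕ) (ht : t ≤ n - 2) (k : Fin 3) (hk : k ≠ par (t+1)) :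
    regionSize (flood (Bt n t) (oo hn) k) (oo hn)
      < regionSize (flood (Bt n t) (oo hn) (par (t+1))) (oo hn) := by
  have hnext : regionSize (flood (Bt n t) (oo hn) (par (t+1))) (oo hn) = (Rt n (t+1)).ncard := by
    rw [flood_next hn t ht]
    exact regionSize_congr (region_Bt hn (t+1) (by omega))
  have hcur : regionSize (Bt n t) (oo hn) = (Rt n t).ncard :=
    regionSize_congr (region_Bt hn t (by omega))
  have hsucc := ncard_Rt_succ hn t ht
  rcases par_cases t k with h0 | hpt | hnx
  · subst h0
    rw [flood_zero_region hn t (by omega), ncard_Rt_hub hn t, hnext]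
    omega
  · subst hpt
    rw [flood_cur hn t, hcur, hnext]
    omega
  · exact absurd hnx hk

lemma gain_last (hn : 4 ≤ n) (k : Fin 3) (hk : k ≠ 0) :
    regionSize (flood (Bt n (n-1)) (oo hn) k) (oo hn)
      < regionSize (flood (Bt n (n-1)) (oo hn) 0) (oo hn) := by
  have hzero : regionSize (flood (Bt n (n-1)) (oo hn) 0) (oo hn) = (Set.univ : Set (Tile n)).ncard := by
    rw [flood_last_zero hn]
    exact regionSize_congr (region_const hn 0)
  have hlt : (Rt n (n-1)).ncard < (Set.univ : Set (Tile n)).ncard := by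
    refine Set.ncard_lt_ncard ?_ (Set.toFinite _)
    constructor
    · exact Set.subset_univ _
    · intro hsub
      have h10 : ((⟨1, by omega⟩ : Fin n), (⟨0, by omega⟩ : Fin n)) ∈ Rt n (n-1) :=
        hsub (Set.mem_univ _)
      exact ((mem_Rt' _ _).mp h10).2
        ⟨by show (1:ℕ) ≤ 1; omega, by show (1:ℕ) ≤ n - 2; omega, rfl⟩
  rcases par_cases (n-1) k with h0 | hpt | hnx
  · exact absurd h0 hk
  · subst hpt
    rw [flood_cur hn (n-1), hzero]
    rw [regionSize_congr (region_Bt hn (n-1) (by omega))]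
    exact hlt
  · subst hnx
    rw [hzero]
    have he : n - 1 + 1 = n := by omega
    rw [he, flood_last_parn hn]
    exact hlt

lemma not_flooded_Bt (hn : 4 ≤ n) (t : ℕ) : ¬ Flooded (Bt n t) := by
  intro h
  have h10 : ((⟨1, by omega⟩ : Fin n), (⟨0, by omega⟩ : Fin n)) ∉ Rt n t := by
    intro hmem
    exact ((mem_Rt' _ _).mp hmem).2
      ⟨by show (1:ℕ) ≤ 1; omega, by show (1:ℕ) ≤ n - 2; omega, rfl⟩
  have hhub : hubP n ((⟨1, by omega⟩ : Fin n), (⟨0, by omega⟩ : Fin n)) :=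
    ⟨by show (1:ℕ) ≤ 1; omega, by show (1:ℕ) ≤ n - 2; omega, rfl⟩
  have := h (oo hn) (⟨1, by omega⟩, ⟨0, by omega⟩)
  have he1 : Bt n t (oo hn) = par t := if_pos (oo_mem_Rt hn t)
  have he2 : Bt n t (⟨1, by omega⟩, ⟨0, by omega⟩) = 0 := by
    show (if _ ∈ Rt n t then par t else myB n _) = 0
    rw [if_neg h10, myB_hub _ hhub]
  rw [he1, he2] at this
  exact par_ne_zero t this

lemma flooded_const (c : Fin 3) : Flooded (fun _ : Tile n => c) := fun _ _ => rfl

lemma greedy_len (hn : 4 ≤ n) : ∀ d t, t + d = n → t ≤ n - 1 →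
    ∀ ms : List (Fin 3), IsGreedy (oo hn) (Bt n t) ms → ms.length = d := by
  intro d
  induction d with
  | zero => intro t h1 h2 ms _; omega
  | succ d ih =>
    intro t h1 h2 ms hms
    cases ms with
    | nil => exact absurd hms (not_flooded_Bt hn t)
    | cons k ks =>
      obtain ⟨hnf, hmax, hrest⟩ := hms
      by_cases hlast : t = n - 1
      · have hd0 : d = 0 := by omega
        subst hd0
        subst hlast
        have hk : k = 0 := by
          by_contra hkne
          exact absurd (hmax 0) (not_le.mpr (gain_last hn k hkne))
        subst hk
        rw [flood_last_zero hn] at hrest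
        cases ks with
        | nil => rfl
        | cons k' ks' => exact absurd (flooded_const 0) hrest.1
      · have ht2 : t ≤ n - 2 := by omega
        have hk : k = par (t+1) := by
          by_contra hkne
          exact absurd (hmax (par (t+1))) (not_le.mpr (gain_mid hn t ht2 k hkne))
        subst hk
        rw [flood_next hn t ht2] at hrest
        have := ih (t+1) (by omega) (by omega) ks hrest
        simp [this]

end S19


/-- for every n ≥ 4 there is an n×n board on 3 colours which can be
flooded in m(B) = 3 moves, but on which the greedy strategy (always pick the
colour giving the largest immediate gain) takes n moves. -/
theorem stmt19 (n : ℕ) (hn : 4 ≤ n) :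
    ∃ B : Board n 3,
      floodMoves B (⟨0, by omega⟩, ⟨0, by omega⟩) = 3 ∧
      ∀ ms : List (Fin 3), IsGreedy (⟨0, by omega⟩, ⟨0, by omega⟩) B ms → ms.length = n := by
  refine ⟨S19.myB n, S19.floodMoves_myB hn, ?_⟩
  intro ms hms
  rw [← S19.Bt_zero] at hms
  exact S19.greedy_len hn n 0 (by omega) (by omega) ms hms
end
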